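/- Let F : ℝ₊^D → ℝ₊^D be continuous, order preserving, and positively homogeneous of degree 1. Then the set { λ ≥ 0 : there exists X ∈ ℝ₊^D \ {0} with F(X) ≥ λ X } has a greatest element, and this greatest element equals the greatest element of the set { λ ≥ 0 : there exists X ∈ ℝ₊^D \ {0} with F(X) = λ X }. -/

import Mathlib

open Filter Topology

private lemma pf_cone_tendsto {D : Type*} [Fintype D]
    {F : (D → ℝ) → (D → ℝ)} (hcont : ContinuousOn F {X : D → ℝ | ∀ d, 0 ≤ X d})
    {Y : ℕ → D → ℝ} {X : D → ℝ} (hmem : ∀ k d, 0 ≤ Y k d) (hX : ∀ d, 0 ≤ X d)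
    (h : Tendsto Y atTop (𝓝 X)) (d : D) :
    Tendsto (fun k => F (Y k) d) atTop (𝓝 (F X d)) := by
  have h1 : Tendsto Y atTop (𝓝[{Z : D → ℝ | ∀ d, 0 ≤ Z d}] X) :=
    tendsto_nhdsWithin_of_tendsto_nhds_of_eventually_within Y h
      (Filter.Eventually.of_forall fun k => hmem k)
  have h2 := (hcont X hX).tendsto.comp h1
  exact tendsto_pi_nhds.mp h2 d

private lemma pf_simplex_compact {D : Type*} [Fintype D] :
    IsCompact {X : D → ℝ | (∀ d, 0 ≤ X d) ∧ ∑ d, X d = 1} := by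
  apply IsCompact.of_isClosed_subset (isCompact_Icc (a := (0 : D → ℝ)) (b := fun _ => 1))
  · rw [Set.setOf_and]
    apply IsClosed.inter
    · have : {X : D → ℝ | ∀ d, 0 ≤ X d} = ⋂ d, {X | 0 ≤ X d} := by
        ext X; simp [Set.mem_iInter]
      rw [this]
      exact isClosed_iInter fun d => isClosed_le continuous_const (continuous_apply d)
    · exact isClosed_eq (continuous_finset_sum _ fun d _ => continuous_apply d) continuous_const
  · intro X hX
    refine Set.mem_Icc.mpr ⟨fun d => hX.1 d, fun d => ?_⟩
    calc X d ≤ ∑ d', X d' := Finset.single_le_sum (fun i _ => hX.1 i) (Finset.mem_univ d)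
    _ = 1 := hX.2

private lemma pf_perturbed {D : Type*} [Fintype D] [Nonempty D]
    (F : (D → ℝ) → (D → ℝ))
    (hmaps : ∀ X : D → ℝ, (∀ d, 0 ≤ X d) → ∀ d, 0 ≤ F X d)
    (hcont : ContinuousOn F {X : D → ℝ | ∀ d, 0 ≤ X d})
    (hmono : ∀ X Y : D → ℝ, (∀ d, 0 ≤ X d) → (∀ d, 0 ≤ Y d) →
      (∀ d, X d ≤ Y d) → ∀ d, F X d ≤ F Y d)
    (hhom : ∀ (c : ℝ), 0 < c → ∀ X : D → ℝ, (∀ d, 0 ≤ X d) →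
      F (c • X) = c • F X)
    {δ : ℝ} (hδ : 0 < δ) (hδ1 : δ ≤ 1) :
    ∃ (lam : ℝ) (Y : D → ℝ), 0 ≤ lam ∧
      lam ≤ (Fintype.card D : ℝ) * ((∑ d, F (fun _ => 1) d) + (Fintype.card D : ℝ)) ∧
      (∀ d, 0 ≤ Y d) ∧ (∑ d, Y d) = 1 ∧
      (∀ d, F Y d + δ = lam * Y d) ∧
      (∀ lam' : ℝ, ∀ X : D → ℝ, 0 ≤ lam' → (∀ d, 0 ≤ X d) → X ≠ 0 →
        (∀ d, lam' * X d ≤ F X d) → lam' ≤ lam) := by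
  classical
  set n : ℝ := (Fintype.card D : ℝ) with hn
  have hnpos : 0 < n := by
    simp only [hn, Nat.cast_pos]
    exact Fintype.card_pos
  -- the super-eigen set of the perturbed map, with normalized witnesses
  set S : Set ℝ := {lam | 0 ≤ lam ∧ ∃ X : D → ℝ, (∀ d, 0 ≤ X d) ∧ (∑ d, X d) = 1 ∧
      ∀ d, lam * X d ≤ F X d + δ * ∑ d', X d'} with hS
  -- normalization: any nonzero super-eigen witness can be normalized
  have hnorm : ∀ lam : ℝ, ∀ X : D → ℝ, 0 ≤ lam → (∀ d, 0 ≤ X d) → X ≠ 0 →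
      (∀ d, lam * X d ≤ F X d + δ * ∑ d', X d') → lam ∈ S := by
    intro lam X hlam hX0 hXne hle
    have hsX : 0 < ∑ d, X d := by
      have : ∃ d, X d ≠ 0 := by
        by_contra h; push_neg at h; exact hXne (funext h)
      obtain ⟨d0, hd0⟩ := this
      exact Finset.sum_pos' (fun i _ => hX0 i)
        ⟨d0, Finset.mem_univ d0, lt_of_le_of_ne (hX0 d0) (Ne.symm hd0)⟩
    have hsXne : (∑ d, X d) ≠ 0 := ne_of_gt hsX
    have hinv : 0 < (∑ d, X d)⁻¹ := inv_pos.mpr hsX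
    refine ⟨hlam, (∑ d, X d)⁻¹ • X, fun d => ?_, ?_, fun d => ?_⟩
    · exact mul_nonneg hinv.le (hX0 d)
    · simp only [Pi.smul_apply, smul_eq_mul, ← Finset.mul_sum]
      exact inv_mul_cancel₀ hsXne
    · have hF : F ((∑ d, X d)⁻¹ • X) = (∑ d, X d)⁻¹ • F X := hhom _ hinv X hX0
      have hsum : ∑ d', ((∑ d, X d)⁻¹ • X) d' = (∑ d, X d)⁻¹ * ∑ d', X d' := by
        simp only [Pi.smul_apply, smul_eq_mul, ← Finset.mul_sum]
      have h1 := mul_le_mul_of_nonneg_left (hle d) hinv.le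
      simp only [Pi.smul_apply, smul_eq_mul, hF, hsum]
      calc lam * ((∑ d, X d)⁻¹ * X d) = (∑ d, X d)⁻¹ * (lam * X d) := by ring
      _ ≤ (∑ d, X d)⁻¹ * (F X d + δ * ∑ d', X d') := h1
      _ = (∑ d, X d)⁻¹ * F X d + δ * ((∑ d, X d)⁻¹ * ∑ d', X d') := by ring
      _ = (∑ d, X d)⁻¹ * F X d + δ * ∑ x, (∑ d, X d)⁻¹ * X x := by rw [Finset.mul_sum]
  -- 0 belongs to S
  have h0S : (0 : ℝ) ∈ S := by
    refine ⟨le_refl 0, fun _ => n⁻¹, fun d => (inv_pos.mpr hnpos).le, ?_, fun d => ?_⟩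
    · rw [Finset.sum_const, Finset.card_univ, nsmul_eq_mul, ← hn,
        mul_inv_cancel₀ (ne_of_gt hnpos)]
    · have h1 : 0 ≤ F (fun _ => n⁻¹) d := hmaps _ (fun d => (inv_pos.mpr hnpos).le) d
      have h2 : (0:ℝ) ≤ δ * ∑ d' : D, n⁻¹ :=
        mul_nonneg hδ.le (Finset.sum_nonneg fun i _ => (inv_pos.mpr hnpos).le)
      simpa using add_nonneg h1 h2
  -- S is bounded above by M
  set M : ℝ := n * ((∑ d, F (fun _ => 1) d) + n) with hM
  have hMub : ∀ lam ∈ S, lam ≤ M := by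
    rintro lam ⟨hlam0, X, hX0, hXs, hXle⟩
    have hXle1 : ∀ d, X d ≤ 1 := fun d => by
      calc X d ≤ ∑ d', X d' := Finset.single_le_sum (fun i _ => hX0 i) (Finset.mem_univ d)
      _ = 1 := hXs
    obtain ⟨d0, hd0⟩ : ∃ d0, n⁻¹ ≤ X d0 := by
      by_contra h
      push_neg at h
      have h2 : ∑ d, X d < ∑ _d : D, n⁻¹ :=
        Finset.sum_lt_sum_of_nonempty Finset.univ_nonempty (fun i _ => h i)
      have h3 : ∑ _d : D, (n⁻¹ : ℝ) = 1 := by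
        rw [Finset.sum_const, Finset.card_univ, nsmul_eq_mul, ← hn,
          mul_inv_cancel₀ (ne_of_gt hnpos)]
      rw [hXs, h3] at h2
      exact lt_irrefl 1 h2
    have hFe : ∀ d, F X d ≤ F (fun _ => 1) d :=
      hmono X (fun _ => 1) hX0 (fun _ => zero_le_one) hXle1
    have hA : lam * X d0 ≤ (∑ d, F (fun _ => 1) d) + n := by
      have h1 : F X d0 ≤ ∑ d, F (fun _ => 1) d := by
        calc F X d0 ≤ F (fun _ => 1) d0 := hFe d0
        _ ≤ ∑ d, F (fun _ => 1) d :=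
          Finset.single_le_sum (fun i _ => hmaps _ (fun _ => zero_le_one) i) (Finset.mem_univ d0)
      have h2 : δ * ∑ d', X d' ≤ n := by
        rw [hXs, mul_one]
        calc δ ≤ 1 := hδ1
        _ ≤ n := by
          simp only [hn, Nat.one_le_cast]
          exact Fintype.card_pos
      calc lam * X d0 ≤ F X d0 + δ * ∑ d', X d' := hXle d0
      _ ≤ (∑ d, F (fun _ => 1) d) + n := add_le_add h1 h2
    have : lam * n⁻¹ ≤ (∑ d, F (fun _ => 1) d) + n :=
      le_trans (mul_le_mul_of_nonneg_left hd0 hlam0) hA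
    rw [← div_eq_mul_inv, div_le_iff₀ hnpos] at this
    rw [hM]
    linarith [this]
  have hbdd : BddAbove S := ⟨M, hMub⟩
  have hSne : S.Nonempty := ⟨0, h0S⟩
  set L : ℝ := sSup S with hL
  have hLub : ∀ lam ∈ S, lam ≤ L := fun lam h => le_csSup hbdd h
  have hL0 : 0 ≤ L := hLub 0 h0S
  have hLM : L ≤ M := csSup_le hSne hMub
  -- attainment of L with witness in the simplex
  obtain ⟨u, -, hut, humem⟩ := exists_seq_tendsto_sSup hSne hbdd
  choose Xs hXs0 hXssum hXsle using fun k => (humem k).2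
  obtain ⟨X, hXΔ, φ, hφ, hXt⟩ := pf_simplex_compact.tendsto_subseq
    (fun k => ⟨hXs0 k, hXssum k⟩)
  have hX0 : ∀ d, 0 ≤ X d := hXΔ.1
  have hXsum : ∑ d, X d = 1 := hXΔ.2
  have hcoord : ∀ d, Tendsto (fun k => Xs (φ k) d) atTop (𝓝 (X d)) :=
    fun d => tendsto_pi_nhds.mp hXt d
  have hsumt : Tendsto (fun k => ∑ d', Xs (φ k) d') atTop (𝓝 (∑ d', X d')) :=
    tendsto_finset_sum _ (fun d _ => hcoord d)
  have hLX : ∀ d, L * X d ≤ F X d + δ * ∑ d', X d' := by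
    intro d
    refine le_of_tendsto_of_tendsto'
      ((hut.comp hφ.tendsto_atTop).mul (hcoord d)) ?_ (fun k => hXsle (φ k) d)
    exact (pf_cone_tendsto hcont (fun k => hXs0 (φ k)) hX0 hXt d).add
      (tendsto_const_nhds.mul hsumt)
  -- Y is a strictly positive super-eigen vector for L
  set Y : D → ℝ := fun d => F X d + δ with hYdef
  have hYδ : ∀ d, δ ≤ Y d := fun d => by
    have := hmaps X hX0 d
    simp only [hYdef]
    linarith
  have hY0 : ∀ d, 0 ≤ Y d := fun d => le_trans hδ.le (hYδ d)
  have hLXY : ∀ d, L * X d ≤ Y d := by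
    intro d
    have h1 := hLX d
    rw [hXsum, mul_one] at h1
    simpa only [hYdef] using h1
  set sY : ℝ := ∑ d, Y d with hsYdef
  have hsY : 0 < sY := Finset.sum_pos (fun d _ => lt_of_lt_of_le hδ (hYδ d)) Finset.univ_nonempty
  have hLsY : L ≤ sY := by
    have h1 := Finset.sum_le_sum (fun d (_ : d ∈ Finset.univ) => hLXY d)
    rw [← Finset.mul_sum, hXsum, mul_one] at h1
    exact h1
  have hLY : ∀ d, L * Y d ≤ F Y d + δ * sY := by
    intro d
    have hLF : L * F X d ≤ F Y d := by
      rcases eq_or_lt_of_le hL0 with h0 | hLpos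
      · rw [← h0, zero_mul]
        exact hmaps Y hY0 d
      · have h1 : ∀ d', (L • X) d' ≤ Y d' := fun d' => by
          simpa [smul_eq_mul] using hLXY d'
        have h2 := hmono (L • X) Y (fun d' => mul_nonneg hL0 (hX0 d')) hY0 h1 d
        rw [hhom L hLpos X hX0] at h2
        simpa [smul_eq_mul] using h2
    have h3 := mul_le_mul_of_nonneg_left hLsY hδ.le
    calc L * Y d = L * F X d + δ * L := by simp only [hYdef]; ring
    _ ≤ F Y d + δ * sY := add_le_add hLF h3
  set Z : D → ℝ := fun d => F Y d + δ * sY with hZdef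
  have hZδ : ∀ d, δ * sY ≤ Z d := fun d => by
    have := hmaps Y hY0 d
    simp only [hZdef]
    linarith
  have hZ0 : ∀ d, 0 ≤ Z d := fun d => le_trans (mul_pos hδ hsY).le (hZδ d)
  have hLYZ : ∀ d, L * Y d ≤ Z d := fun d => hLY d
  set sZ : ℝ := ∑ d, Z d with hsZdef
  have hsZ : 0 < sZ :=
    Finset.sum_pos (fun d _ => lt_of_lt_of_le (mul_pos hδ hsY) (hZδ d)) Finset.univ_nonempty
  have hZle : ∀ d, Z d ≤ sZ := fun d =>
    Finset.single_le_sum (fun i _ => hZ0 i) (Finset.mem_univ d)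
  -- the maximality of L forces equality
  have heig : ∀ d, F Y d + δ * sY = L * Y d := by
    by_contra hcon
    push_neg at hcon
    obtain ⟨d0, hd0⟩ := hcon
    have hd0' : L * Y d0 < Z d0 := lt_of_le_of_ne (hLYZ d0) (by simpa only [hZdef] using (Ne.symm hd0))
    have hc : L * sY < sZ := by
      have h1 : ∑ d, L * Y d < ∑ d, Z d :=
        Finset.sum_lt_sum (fun d _ => hLYZ d) ⟨d0, Finset.mem_univ d0, hd0'⟩
      rw [← Finset.mul_sum] at h1
      exact h1
    set c : ℝ := sZ - L * sY with hcdef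
    have hcpos : 0 < c := by simp only [hcdef]; linarith
    have hεpos : 0 < δ * c / sZ := div_pos (mul_pos hδ hcpos) hsZ
    have hclaim : ∀ d, (L + δ * c / sZ) * Z d ≤ F Z d + δ * ∑ d', Z d' := by
      intro d
      have hLFY : L * F Y d ≤ F Z d := by
        rcases eq_or_lt_of_le hL0 with h0 | hLpos
        · rw [← h0, zero_mul]
          exact hmaps Z hZ0 d
        · have h1 : ∀ d', (L • Y) d' ≤ Z d' := fun d' => by
            simpa [smul_eq_mul] using hLYZ d'
          have h2 := hmono (L • Y) Z (fun d' => mul_nonneg hL0 (hY0 d')) hZ0 h1 d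
          rw [hhom L hLpos Y hY0] at h2
          simpa [smul_eq_mul] using h2
      have hstep : L * Z d + δ * c ≤ F Z d + δ * sZ := by
        have hZd : Z d = F Y d + δ * sY := by simp only [hZdef]
        have hcc : c = sZ - L * sY := hcdef
        nlinarith [hLFY]
      have hstep2 : (δ * c / sZ) * Z d ≤ δ * c := by
        have h4 : (δ * c / sZ) * Z d ≤ (δ * c / sZ) * sZ :=
          mul_le_mul_of_nonneg_left (hZle d) (le_of_lt hεpos)
        rwa [div_mul_cancel₀ _ (ne_of_gt hsZ)] at h4
      have hsum : ∑ d', Z d' = sZ := hsZdef.symm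
      rw [hsum]
      calc (L + δ * c / sZ) * Z d = L * Z d + (δ * c / sZ) * Z d := by ring
      _ ≤ L * Z d + δ * c := by linarith
      _ ≤ F Z d + δ * sZ := hstep
    have hZne : Z ≠ 0 := by
      intro h
      have h1 := congrFun h d0
      have h2 := hZδ d0
      rw [h1] at h2
      exact absurd h2 (not_le.mpr (mul_pos hδ hsY))
    have hμS : L + δ * c / sZ ∈ S :=
      hnorm _ Z (by linarith) hZ0 hZne hclaim
    have := hLub _ hμS
    linarith
  -- normalize the eigenvector
  have hsYinv : (0:ℝ) < sY⁻¹ := inv_pos.mpr hsY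
  have hinv1 : sY⁻¹ * sY = 1 := inv_mul_cancel₀ (ne_of_gt hsY)
  refine ⟨L, sY⁻¹ • Y, hL0, hLM, fun d => mul_nonneg hsYinv.le (hY0 d), ?_, fun d => ?_, ?_⟩
  · simp only [Pi.smul_apply, smul_eq_mul, ← Finset.mul_sum]
    rw [← hsYdef, hinv1]
  · rw [hhom _ hsYinv Y hY0]
    simp only [Pi.smul_apply, smul_eq_mul]
    linear_combination sY⁻¹ * heig d - δ * hinv1
  · intro lam' X' h0' hX0' hne' hle'
    refine hLub _ (hnorm lam' X' h0' hX0' hne' fun d => ?_)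
    exact le_trans (hle' d)
      (le_add_of_nonneg_right (mul_nonneg hδ.le (Finset.sum_nonneg fun i _ => hX0' i)))

/-- For a continuous, order preserving, positively homogeneous
(degree 1) self-map F of ℝ₊^D, the set
{ λ ≥ 0 : ∃ X ∈ ℝ₊^D \ {0}, F(X) ≥ λX } has a greatest element, and it
coincides with the greatest element of
{ λ ≥ 0 : ∃ X ∈ ℝ₊^D \ {0}, F(X) = λX }. -/
theorem collatzWielandt_superEigen_eq_eigen
    {D : Type*} [Fintype D] [Nonempty D]
    (F : (D → ℝ) → (D → ℝ))
    (hmaps : ∀ X : D → ℝ, (∀ d, 0 ≤ X d) → ∀ d, 0 ≤ F X d)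
    (hcont : ContinuousOn F {X : D → ℝ | ∀ d, 0 ≤ X d})
    (hmono : ∀ X Y : D → ℝ, (∀ d, 0 ≤ X d) → (∀ d, 0 ≤ Y d) →
      (∀ d, X d ≤ Y d) → ∀ d, F X d ≤ F Y d)
    (hhom : ∀ (c : ℝ), 0 < c → ∀ X : D → ℝ, (∀ d, 0 ≤ X d) →
      F (c • X) = c • F X) :
    ∃ lamstar : ℝ,
      IsGreatest {lam : ℝ | 0 ≤ lam ∧ ∃ X : D → ℝ,
        (∀ d, 0 ≤ X d) ∧ X ≠ 0 ∧ (∀ d, lam * X d ≤ F X d)} lamstar ∧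
      IsGreatest {lam : ℝ | 0 ≤ lam ∧ ∃ X : D → ℝ,
        (∀ d, 0 ≤ X d) ∧ X ≠ 0 ∧ (∀ d, F X d = lam * X d)} lamstar := by
  classical
  -- apply the perturbation lemma with δ = 1/(k+1)
  have hδpos : ∀ k : ℕ, (0:ℝ) < ((k:ℝ) + 1)⁻¹ := fun k => by positivity
  have hδ1 : ∀ k : ℕ, ((k:ℝ) + 1)⁻¹ ≤ 1 := fun k => by
    rw [inv_le_one_iff₀]; right; linarith [Nat.cast_nonneg (α := ℝ) k]
  have hex : ∀ k : ℕ, ∃ (lam : ℝ) (Y : D → ℝ), 0 ≤ lam ∧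
      lam ≤ (Fintype.card D : ℝ) * ((∑ d, F (fun _ => 1) d) + (Fintype.card D : ℝ)) ∧
      (∀ d, 0 ≤ Y d) ∧ (∑ d, Y d) = 1 ∧
      (∀ d, F Y d + ((k:ℝ) + 1)⁻¹ = lam * Y d) ∧
      (∀ lam' : ℝ, ∀ X : D → ℝ, 0 ≤ lam' → (∀ d, 0 ≤ X d) → X ≠ 0 →
        (∀ d, lam' * X d ≤ F X d) → lam' ≤ lam) :=
    fun k => pf_perturbed F hmaps hcont hmono hhom (hδpos k) (hδ1 k)
  choose lam Ys hlam0 hlamM hY0 hYsum heig hub using hex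
  -- extract a convergent subsequence of the eigenvectors
  obtain ⟨Y, hYΔ, φ, hφ, hYt⟩ := pf_simplex_compact.tendsto_subseq
    (x := Ys) (fun k => ⟨hY0 k, hYsum k⟩)
  -- extract a convergent subsequence of the eigenvalues
  set M : ℝ := (Fintype.card D : ℝ) * ((∑ d, F (fun _ => 1) d) + (Fintype.card D : ℝ)) with hM
  obtain ⟨μ, hμIcc, ψ, hψ, hlamt⟩ := (isCompact_Icc (a := (0:ℝ)) (b := M)).tendsto_subseq
    (x := fun k => lam (φ k)) (fun k => ⟨hlam0 (φ k), hlamM (φ k)⟩)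
  set σ : ℕ → ℕ := φ ∘ ψ with hσ
  have hσmono : StrictMono σ := hφ.comp hψ
  have hYt' : Filter.Tendsto (fun k => Ys (σ k)) Filter.atTop (nhds Y) := hYt.comp hψ.tendsto_atTop
  have hcoord : ∀ d, Filter.Tendsto (fun k => Ys (σ k) d) Filter.atTop (nhds (Y d)) :=
    fun d => tendsto_pi_nhds.mp hYt' d
  have hδt : Filter.Tendsto (fun k => ((σ k : ℝ) + 1)⁻¹) Filter.atTop (nhds 0) := by
    have h1 : Filter.Tendsto (fun n : ℕ => ((n:ℝ) + 1)⁻¹) Filter.atTop (nhds 0) := by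
      simpa only [one_div] using (tendsto_one_div_add_atTop_nhds_zero_nat :
        Tendsto (fun n : ℕ => 1 / ((n : ℝ) + 1)) atTop (𝓝 0))
    exact h1.comp hσmono.tendsto_atTop
  -- pass to the limit in the eigen equation
  have heigY : ∀ d, F Y d = μ * Y d := by
    intro d
    have t1 : Filter.Tendsto (fun k => F (Ys (σ k)) d + ((σ k : ℝ) + 1)⁻¹)
        Filter.atTop (nhds (F Y d + 0)) :=
      (pf_cone_tendsto hcont (fun k => hY0 (σ k)) hYΔ.1 hYt' d).add hδt
    have t2 : Filter.Tendsto (fun k => lam (σ k) * Ys (σ k) d)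
        Filter.atTop (nhds (μ * Y d)) := hlamt.mul (hcoord d)
    have teq : (fun k => F (Ys (σ k)) d + ((σ k : ℝ) + 1)⁻¹)
        = fun k => lam (σ k) * Ys (σ k) d := funext fun k => heig (σ k) d
    rw [teq] at t1
    have := tendsto_nhds_unique t1 t2
    linarith [this]
  have hYne : Y ≠ 0 := by
    intro h
    have h1 := hYΔ.2
    rw [h] at h1
    simp at h1
  have hμub : ∀ lam' : ℝ, ∀ X : D → ℝ, 0 ≤ lam' → (∀ d, 0 ≤ X d) → X ≠ 0 →
      (∀ d, lam' * X d ≤ F X d) → lam' ≤ μ := by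
    intro lam' X h0 hX0 hne hle
    exact ge_of_tendsto' hlamt fun k => hub (σ k) lam' X h0 hX0 hne hle
  refine ⟨μ, ⟨⟨hμIcc.1, Y, hYΔ.1, hYne, fun d => (heigY d).ge⟩, ?_⟩,
    ⟨⟨hμIcc.1, Y, hYΔ.1, hYne, heigY⟩, ?_⟩⟩
  · rintro lam' ⟨h0, X, hX0, hne, hle⟩
    exact hμub lam' X h0 hX0 hne hle
  · rintro lam' ⟨h0, X, hX0, hne, hle⟩
    exact hμub lam' X h0 hX0 hne fun d => (hle d).ge
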